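/- The function p_β(τ) := −4n τ|τ|^{β−1} + C_β n² τ + C_β τ|τ|^{2(β−1)} is odd, and |p_β(τ)| ≤ λ_β n² n^{1/(β−1)} for every τ ∈ [−n^{1/(β−1)}, n^{1/(β−1)}], where λ_β := 4(β−1)²/(2β−1). -/

import Mathlib

noncomputable section

/-- The auxiliary function `p_β`, with `C_β = 2 + 2(β−1)²/(2β−1)`. -/
def pbeta (β : ℝ) (n : ℕ) (τ : ℝ) : ℝ :=
  -4 * (n : ℝ) * τ * |τ| ^ (β - 1) + (2 + 2 * (β - 1) ^ 2 / (2 * β - 1)) * (n : ℝ) ^ 2 * τ +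
    (2 + 2 * (β - 1) ^ 2 / (2 * β - 1)) * τ * |τ| ^ (2 * (β - 1))

namespace Stmt8Aux

lemma hasDerivAt_f (β : ℝ) (hβ : 1 < β) (C N τ : ℝ) :
    HasDerivAt (fun t : ℝ => -4 * N * t ^ β + C * N ^ 2 * t + C * t ^ (2 * β - 1))
      (-4 * N * (β * τ ^ (β - 1)) + C * N ^ 2 + C * ((2 * β - 1) * τ ^ (2 * β - 2))) τ := by
  have h1 : HasDerivAt (fun t : ℝ => t ^ β) (β * τ ^ (β - 1)) τ :=
    Real.hasDerivAt_rpow_const (Or.inr hβ.le)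
  have h2 : HasDerivAt (fun t : ℝ => t ^ (2 * β - 1)) ((2 * β - 1) * τ ^ (2 * β - 1 - 1)) τ :=
    Real.hasDerivAt_rpow_const (Or.inr (by linarith))
  have h3 : HasDerivAt (fun t : ℝ => t) 1 τ := hasDerivAt_id τ
  have := ((h1.const_mul (-4 * N)).add (h3.const_mul (C * N ^ 2))).add
      (h2.const_mul C)
  rw [show (2 : ℝ) * β - 1 - 1 = 2 * β - 2 from by ring, mul_one] at this
  exact this

end Stmt8Aux

/-- `p_β` is odd and `|p_β(τ)| ≤ λ_β n² n^{1/(β−1)}` on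
`[−n^{1/(β−1)}, n^{1/(β−1)}]`, where `λ_β = 4(β−1)²/(2β−1)`. -/
theorem statement_8 (β : ℝ) (hβ : 1 < β) (n : ℕ) (hn : 0 < n) :
    (∀ τ : ℝ, pbeta β n (-τ) = -pbeta β n τ) ∧
    (∀ τ : ℝ, τ ∈ Set.Icc (-((n : ℝ) ^ ((1 : ℝ) / (β - 1)))) ((n : ℝ) ^ ((1 : ℝ) / (β - 1))) →
      |pbeta β n τ| ≤ (4 * (β - 1) ^ 2 / (2 * β - 1)) * (n : ℝ) ^ 2 *
        (n : ℝ) ^ ((1 : ℝ) / (β - 1))) := by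
  have hβ1 : (0 : ℝ) < β - 1 := by linarith
  have h2β : (0 : ℝ) < 2 * β - 1 := by linarith
  set C : ℝ := 2 + 2 * (β - 1) ^ 2 / (2 * β - 1) with hC
  set lam : ℝ := 4 * (β - 1) ^ 2 / (2 * β - 1) with hlam
  have hCpos : 0 < C := by positivity
  have hlamnn : 0 ≤ lam := by positivity
  have hCeq : C * (2 * β - 1) = 2 * β ^ 2 := by
    rw [hC, add_mul, div_mul_cancel₀ _ h2β.ne']; ring
  have hlamC : lam = 2 * C - 4 := by
    field_simp [hlam, hC]; ring
  set N : ℝ := (n : ℝ) with hN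
  have hNpos : (0 : ℝ) < N := by rw [hN]; exact_mod_cast hn
  set M : ℝ := N ^ ((1 : ℝ) / (β - 1)) with hM
  have hMpos : 0 < M := Real.rpow_pos_of_pos hNpos _
  have hMx : M ^ (β - 1) = N := by
    rw [hM, ← Real.rpow_mul hNpos.le, one_div_mul_cancel (ne_of_gt hβ1), Real.rpow_one]
  -- odd
  have hodd : ∀ τ : ℝ, pbeta β n (-τ) = -pbeta β n τ := by
    intro τ
    simp only [pbeta, abs_neg]
    ring
  refine ⟨hodd, ?_⟩
  -- relate pbeta to the rpow form on nonneg reals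
  set f : ℝ → ℝ := fun t => -4 * N * t ^ β + C * N ^ 2 * t + C * t ^ (2 * β - 1) with hf
  have hsplit : ∀ t : ℝ, 0 ≤ t → pbeta β n t = f t := by
    intro t ht
    have h1 : t ^ β = t * t ^ (β - 1) := by
      have := Real.rpow_add' ht (y := 1) (z := β - 1) (by intro h; nlinarith)
      rw [show (1 : ℝ) + (β - 1) = β by ring, Real.rpow_one] at this
      exact this
    have h2 : t ^ (2 * β - 1) = t * t ^ (2 * (β - 1)) := by
      have := Real.rpow_add' ht (y := 1) (z := 2 * (β - 1)) (by intro h; nlinarith)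
      rw [show (1 : ℝ) + 2 * (β - 1) = 2 * β - 1 by ring, Real.rpow_one] at this
      exact this
    simp only [pbeta, f, abs_of_nonneg ht, h1, h2]
    ring
  -- f is monotone on [0, ∞)
  have hderiv_nonneg : ∀ τ : ℝ, 0 ≤ τ →
      0 ≤ -4 * N * (β * τ ^ (β - 1)) + C * N ^ 2 + C * ((2 * β - 1) * τ ^ (2 * β - 2)) := by
    intro τ hτ
    set x : ℝ := τ ^ (β - 1) with hx
    have hxnn : 0 ≤ x := Real.rpow_nonneg hτ _
    have hx2 : τ ^ (2 * β - 2) = x ^ 2 := by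
      rw [show 2 * β - 2 = (β - 1) * 2 by ring, Real.rpow_mul hτ, hx,
        Real.rpow_two]
    rw [hx2]
    rw [← sub_nonneg] at *
    nlinarith [sq_nonneg (β * x - N), sq_nonneg ((β - 1) * N), mul_pos h2β hNpos,
      mul_nonneg h2β.le (sq_nonneg (β * x - N))]
  have hmono : MonotoneOn f (Set.Ici (0 : ℝ)) := by
    apply monotoneOn_of_deriv_nonneg (convex_Ici 0)
    · exact fun t _ => ((Stmt8Aux.hasDerivAt_f β hβ C N t).continuousAt).continuousWithinAt
    · intro t ht
      exact ((Stmt8Aux.hasDerivAt_f β hβ C N t).differentiableAt).differentiableWithinAt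
    · intro t ht
      rw [interior_Ici] at ht
      rw [(Stmt8Aux.hasDerivAt_f β hβ C N t).deriv]
      exact hderiv_nonneg t (le_of_lt ht)
  -- value at M
  have hfM : f M = lam * N ^ 2 * M := by
    have h1 : M ^ β = M * N := by
      have := Real.rpow_add' hMpos.le (y := 1) (z := β - 1) (by intro h; nlinarith)
      rw [show (1 : ℝ) + (β - 1) = β by ring, Real.rpow_one, hMx] at this
      exact this
    have h2 : M ^ (2 * β - 1) = M * N ^ 2 := by
      have := Real.rpow_add' hMpos.le (y := 1) (z := (β - 1) * 2) (by intro h; nlinarith)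
      rw [show (1 : ℝ) + (β - 1) * 2 = 2 * β - 1 by ring, Real.rpow_one,
        Real.rpow_mul hMpos.le, hMx, Real.rpow_two] at this
      exact this
    simp only [f, h1, h2, hlamC]
    ring
  -- nonnegativity of pbeta on [0,∞)
  have hnn : ∀ t : ℝ, 0 ≤ t → 0 ≤ pbeta β n t := by
    intro t ht
    have hx2 : |t| ^ (2 * (β - 1)) = (|t| ^ (β - 1)) ^ 2 := by
      rw [show 2 * (β - 1) = (β - 1) * 2 by ring, Real.rpow_mul (abs_nonneg t), Real.rpow_two]
    set x : ℝ := |t| ^ (β - 1) with hx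
    have hxnn : 0 ≤ x := Real.rpow_nonneg (abs_nonneg t) _
    have key : pbeta β n t = C * t * (x - N) ^ 2 + (2 * C - 4) * N * t * x := by
      simp only [pbeta, hx2, ← hx, ← hN, ← hC]
      ring
    rw [key, ← hlamC]
    have : 0 ≤ lam * N * t * x := by positivity
    nlinarith [mul_nonneg (mul_nonneg hCpos.le ht) (sq_nonneg (x - N))]
  -- main bound on [0, M]
  have hbound : ∀ t : ℝ, 0 ≤ t → t ≤ M → |pbeta β n t| ≤ lam * N ^ 2 * M := by
    intro t ht htM
    rw [abs_of_nonneg (hnn t ht), hsplit t ht, ← hfM]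
    exact hmono ht (le_of_lt hMpos) htM
  intro τ hτ
  rcases le_total 0 τ with h | h
  · exact hbound τ h hτ.2
  · have := hbound (-τ) (by linarith) (by linarith [hτ.1])
    rwa [hodd τ, abs_neg] at this
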